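/- Let A ∈ M_n(ℝ), Λ ∈ M_m(ℝ), N ∈ M_{n×m}(ℝ), v ∈ ℝⁿ, and w ∈ ℝᵐ. Then vᵀ·exp(hA)·N·exp(tΛ)·w = 0 for all h ∈ [0,1] and all t ≥ 0 if and only if vᵀ·Aᵅ·N·Λᵝ·w = 0 for all integers 0 ≤ α ≤ n−1 and 0 ≤ β ≤ m−1. -/

import Mathlib

open Matrix NormedSpace

/-- The continuous linear functional `X ↦ c ⬝ᵥ X.mulVec d` on matrices. -/
noncomputable def sandwichL {p q : ℕ} (c : Fin p → ℝ) (d : Fin q → ℝ) :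
    Matrix (Fin p) (Fin q) ℝ →L[ℝ] ℝ :=
  LinearMap.toContinuousLinearMap
    { toFun := fun X => c ⬝ᵥ X.mulVec d
      map_add' := fun X Y => by simp [Matrix.add_mulVec, dotProduct_add]
      map_smul' := fun r X => by
        simp [Matrix.smul_mulVec, dotProduct_smul] }

lemma sandwichL_apply {p q : ℕ} (c : Fin p → ℝ) (d : Fin q → ℝ)
    (X : Matrix (Fin p) (Fin q) ℝ) : sandwichL c d X = c ⬝ᵥ X.mulVec d := rfl

/-- If all moments `c Bᵏ d` vanish, then `c e^{sB} d = 0` for all `s`. -/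
lemma exp_moments_zero {p : ℕ} (B : Matrix (Fin p) (Fin p) ℝ) (c d : Fin p → ℝ)
    (h : ∀ k : ℕ, c ⬝ᵥ ((B ^ k).mulVec d) = 0) (s : ℝ) :
    c ⬝ᵥ ((NormedSpace.exp (s • B)).mulVec d) = 0 := by
  letI : SeminormedRing (Matrix (Fin p) (Fin p) ℝ) := Matrix.linftyOpSemiNormedRing
  letI : NormedRing (Matrix (Fin p) (Fin p) ℝ) := Matrix.linftyOpNormedRing
  letI : NormedAlgebra ℝ (Matrix (Fin p) (Fin p) ℝ) := Matrix.linftyOpNormedAlgebra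
  have hsum : Summable (fun k : ℕ => ((Nat.factorial k : ℝ)⁻¹) • (s • B) ^ k) :=
    expSeries_summable' (𝕂 := ℝ) (s • B)
  have hexp : NormedSpace.exp (s • B) = ∑' k : ℕ, ((Nat.factorial k : ℝ)⁻¹) • (s • B) ^ k := by
    rw [exp_eq_tsum ℝ]
  have : c ⬝ᵥ ((NormedSpace.exp (s • B)).mulVec d) = sandwichL c d (NormedSpace.exp (s • B)) := rfl
  rw [this, hexp, (sandwichL c d).map_tsum hsum]
  have : ∀ k : ℕ, sandwichL c d (((Nat.factorial k : ℝ)⁻¹) • (s • B) ^ k) = 0 := by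
    intro k
    rw [smul_pow, (sandwichL c d).map_smul, (sandwichL c d).map_smul, sandwichL_apply, h k]
    simp
  simp only [this, tsum_zero]

/-- If the moments `c Bᵏ d` vanish for `k < p`, they vanish for all `k`
(Cayley–Hamilton). -/
lemma moments_all {p : ℕ} (B : Matrix (Fin p) (Fin p) ℝ) (c d : Fin p → ℝ)
    (h : ∀ k < p, c ⬝ᵥ ((B ^ k).mulVec d) = 0) :
    ∀ k : ℕ, c ⬝ᵥ ((B ^ k).mulVec d) = 0 := by
  intro k
  by_cases hk : k < p
  · exact h k hk
  rcases Nat.eq_zero_or_pos p with hp | hp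
  · subst hp
    simp [dotProduct]
  have hch := Matrix.pow_eq_aeval_mod_charpoly B k
  set r : Polynomial ℝ := Polynomial.X ^ k %ₘ Matrix.charpoly B with hr
  by_cases hr0 : r = 0
  · rw [hch, hr0]
    simp
  have hdeg : r.natDegree < p := by
    have h1 : r.degree < (Matrix.charpoly B).degree :=
      Polynomial.degree_modByMonic_lt _ (Matrix.charpoly_monic B)
    have h2 : (Matrix.charpoly B).degree = (p : ℕ) := by
      simpa using Matrix.charpoly_degree_eq_dim B
    rw [h2] at h1
    exact (Polynomial.natDegree_lt_iff_degree_lt hr0).2 h1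
  rw [hch, Polynomial.aeval_eq_sum_range' hdeg]
  have : c ⬝ᵥ ((∑ i ∈ Finset.range p, r.coeff i • B ^ i).mulVec d)
      = sandwichL c d (∑ i ∈ Finset.range p, r.coeff i • B ^ i) := rfl
  rw [this, map_sum]
  refine Finset.sum_eq_zero fun i hi => ?_
  rw [(sandwichL c d).map_smul, sandwichL_apply, h i (Finset.mem_range.mp hi)]
  simp

/-- If `c e^{sB} d = 0` on `[0,1]`, then all moments `c Bᵏ d` vanish. -/
lemma moments_zero {p : ℕ} (B : Matrix (Fin p) (Fin p) ℝ) (c d : Fin p → ℝ)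
    (h : ∀ s ∈ Set.Icc (0 : ℝ) 1, c ⬝ᵥ ((NormedSpace.exp (s • B)).mulVec d) = 0) :
    ∀ k : ℕ, c ⬝ᵥ ((B ^ k).mulVec d) = 0 := by
  letI : SeminormedRing (Matrix (Fin p) (Fin p) ℝ) := Matrix.linftyOpSemiNormedRing
  letI : NormedRing (Matrix (Fin p) (Fin p) ℝ) := Matrix.linftyOpNormedRing
  letI : NormedAlgebra ℝ (Matrix (Fin p) (Fin p) ℝ) := Matrix.linftyOpNormedAlgebra
  set Φ : ℕ → ℝ → ℝ := fun k s => sandwichL c d (B ^ k * NormedSpace.exp (s • B)) with hΦ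
  have hderiv : ∀ (k : ℕ) (u : ℝ), HasDerivAt (Φ k) (Φ (k + 1) u) u := by
    intro k u
    have h1 : HasDerivAt (fun u : ℝ => NormedSpace.exp (u • B)) (B * NormedSpace.exp (u • B)) u :=
      hasDerivAt_exp_smul_const' B u
    have h2 : HasDerivAt (fun u : ℝ => B ^ k * NormedSpace.exp (u • B))
        (B ^ k * (B * NormedSpace.exp (u • B))) u := h1.const_mul (B ^ k)
    have h3 := (sandwichL c d).hasFDerivAt.comp_hasDerivAt u h2
    have h4 : B ^ k * (B * NormedSpace.exp (u • B)) = B ^ (k + 1) * NormedSpace.exp (u • B) := by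
      rw [pow_succ, mul_assoc]
    rw [h4] at h3
    exact h3
  have hcont : ∀ k : ℕ, Continuous (Φ k) := by
    intro k
    exact continuous_iff_continuousAt.2 fun u => (hderiv k u).continuousAt
  have key : ∀ k : ℕ, ∀ s ∈ Set.Ioo (0 : ℝ) 1, Φ k s = 0 := by
    intro k
    induction k with
    | zero =>
      intro s hs
      simpa [hΦ, sandwichL_apply] using h s (Set.mem_Icc_of_Ioo hs)
    | succ k ih =>
      intro s hs
      have hev : Φ k =ᶠ[nhds s] (fun _ => (0 : ℝ)) := by
        filter_upwards [isOpen_Ioo.mem_nhds hs] with x hx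
        exact ih x hx
      have h0 : HasDerivAt (fun _ : ℝ => (0 : ℝ)) (Φ (k + 1) s) s :=
        (hderiv k s).congr_of_eventuallyEq hev.symm
      have h1 : HasDerivAt (fun _ : ℝ => (0 : ℝ)) 0 s := hasDerivAt_const s 0
      exact (h0.unique h1)
  intro k
  have hclos : ∀ s ∈ closure (Set.Ioo (0 : ℝ) 1), Φ k s = 0 := by
    intro s hs
    have := (Set.EqOn.closure (fun x hx => key k x hx) (hcont k)
      continuous_const) hs
    simpa using this
  have h0 : Φ k 0 = 0 := by
    apply hclos
    rw [closure_Ioo (by norm_num : (0 : ℝ) ≠ 1)]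
    exact Set.mem_Icc.mpr ⟨le_refl _, by norm_num⟩
  have : Φ k 0 = c ⬝ᵥ ((B ^ k).mulVec d) := by
    simp [hΦ, sandwichL_apply, exp_zero]
  rw [this] at h0
  exact h0

/-- `vᵀ e^{hA} N e^{tΛ} w = 0` for all `h ∈ [0,1]` and `t ≥ 0` if and only if
`vᵀ Aᵅ N Λᵝ w = 0` for all `0 ≤ α ≤ n−1` and `0 ≤ β ≤ m−1`. -/
theorem exp_sandwich_zero_iff_powers {n m : ℕ}
    (A : Matrix (Fin n) (Fin n) ℝ) (Λ : Matrix (Fin m) (Fin m) ℝ)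
    (N : Matrix (Fin n) (Fin m) ℝ) (v : Fin n → ℝ) (w : Fin m → ℝ) :
    (∀ h ∈ Set.Icc (0 : ℝ) 1, ∀ t : ℝ, 0 ≤ t →
        v ⬝ᵥ ((NormedSpace.exp (h • A) * N * NormedSpace.exp (t • Λ)).mulVec w) = 0) ↔
      (∀ α < n, ∀ β < m, v ⬝ᵥ ((A ^ α * N * Λ ^ β).mulVec w) = 0) := by
  constructor
  · intro H α hα β hβ
    -- Step 1: for fixed t ≥ 0, kill the first exponential.
    have step1 : ∀ t : ℝ, 0 ≤ t → ∀ k : ℕ,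
        v ⬝ᵥ ((A ^ k).mulVec ((N * NormedSpace.exp (t • Λ)).mulVec w)) = 0 := by
      intro t ht
      apply moments_zero A v ((N * NormedSpace.exp (t • Λ)).mulVec w)
      intro s hs
      have := H s hs t ht
      simpa [Matrix.mulVec_mulVec, Matrix.mul_assoc] using this
    -- Step 2: kill the second exponential.
    have step2 : ∀ j : ℕ,
        (Matrix.vecMul v (A ^ α * N)) ⬝ᵥ ((Λ ^ j).mulVec w) = 0 := by
      apply moments_zero Λ (Matrix.vecMul v (A ^ α * N)) w
      intro s hs
      have := step1 s hs.1 α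
      rw [← Matrix.dotProduct_mulVec]
      simpa [Matrix.mulVec_mulVec, Matrix.mul_assoc] using this
    have := step2 β
    rw [← Matrix.dotProduct_mulVec] at this
    simpa [Matrix.mulVec_mulVec, Matrix.mul_assoc] using this
  · intro H h _ t _
    -- Extend power identities to all exponents via Cayley–Hamilton.
    have h1 : ∀ β < m, ∀ α : ℕ, v ⬝ᵥ ((A ^ α * N * Λ ^ β).mulVec w) = 0 := by
      intro β hβ α
      have := moments_all A v ((N * Λ ^ β).mulVec w)
        (fun k hk => by simpa [Matrix.mulVec_mulVec, Matrix.mul_assoc] using H k hk β hβ) α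
      simpa [Matrix.mulVec_mulVec, Matrix.mul_assoc] using this
    have h2 : ∀ α β : ℕ, v ⬝ᵥ ((A ^ α * N * Λ ^ β).mulVec w) = 0 := by
      intro α β
      have := moments_all Λ (Matrix.vecMul v (A ^ α * N)) w
        (fun j hj => by
          rw [← Matrix.dotProduct_mulVec]
          simpa [Matrix.mulVec_mulVec, Matrix.mul_assoc] using h1 j hj α) β
      rw [← Matrix.dotProduct_mulVec] at this
      simpa [Matrix.mulVec_mulVec, Matrix.mul_assoc] using this
    -- Now resum the exponentials.
    have h3 : ∀ α : ℕ,
        v ⬝ᵥ ((A ^ α).mulVec ((N * NormedSpace.exp (t • Λ)).mulVec w)) = 0 := by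
      intro α
      have := exp_moments_zero Λ (Matrix.vecMul v (A ^ α * N)) w
        (fun j => by
          rw [← Matrix.dotProduct_mulVec]
          simpa [Matrix.mulVec_mulVec, Matrix.mul_assoc] using h2 α j) t
      rw [← Matrix.dotProduct_mulVec] at this
      simpa [Matrix.mulVec_mulVec, Matrix.mul_assoc] using this
    have := exp_moments_zero A v ((N * NormedSpace.exp (t • Λ)).mulVec w) h3 h
    simpa [Matrix.mulVec_mulVec, Matrix.mul_assoc] using this
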